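/- Let Σ be a symmetric positive definite p×p matrix and N ∈ ℕ. For each λ > 0, there exists a unique κ > 0 satisfying the self-consistent equation (1/N)Tr[Σ(Σ+κI)^{-1}] + λ/κ = 1. -/

import Mathlib

open Matrix

-- scalar lemma
lemma scalar_eu (p N : ℕ) (hN : 0 < N) (μ : Fin p → ℝ) (hμ : ∀ i, 0 < μ i)
    (lam : ℝ) (hlam : 0 < lam) :
    ∃! κ : ℝ, 0 < κ ∧ (N : ℝ)⁻¹ * (∑ i, μ i / (μ i + κ)) + lam / κ = 1 := by
  set f : ℝ → ℝ := fun κ => (N : ℝ)⁻¹ * (∑ i, μ i / (μ i + κ)) + lam / κ with hf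
  have hNinv : (0:ℝ) ≤ (N:ℝ)⁻¹ := by positivity
  have hanti : StrictAntiOn f (Set.Ioi 0) := by
    intro a ha b hb hab
    simp only [Set.mem_Ioi] at ha hb
    have h1 : lam / b < lam / a := div_lt_div_of_pos_left hlam ha hab
    have h2 : ∑ i, μ i / (μ i + b) ≤ ∑ i, μ i / (μ i + a) := by
      apply Finset.sum_le_sum
      intro i _
      exact div_le_div_of_nonneg_left (hμ i).le (by linarith [hμ i]) (by linarith)
    have h3 : (N : ℝ)⁻¹ * (∑ i, μ i / (μ i + b)) ≤ (N : ℝ)⁻¹ * (∑ i, μ i / (μ i + a)) :=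
      mul_le_mul_of_nonneg_left h2 hNinv
    exact add_lt_add_of_le_of_lt h3 h1
  set C : ℝ := (N : ℝ)⁻¹ * (∑ i, μ i) + lam with hC
  have hsum0 : (0:ℝ) ≤ (N : ℝ)⁻¹ * (∑ i, μ i) := by
    apply mul_nonneg hNinv
    apply Finset.sum_nonneg
    intro i _; exact (hμ i).le
  have hlamC : lam ≤ C := by simp [hC]; linarith
  set κ₀ : ℝ := C + 1 with hκ₀
  have hκ₀pos : 0 < κ₀ := by simp [hκ₀]; linarith
  have hlt : lam < κ₀ := by simp [hκ₀]; linarith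
  have hflam : 1 ≤ f lam := by
    have : lam / lam = 1 := div_self hlam.ne'
    simp only [hf, this]
    have : 0 ≤ (N : ℝ)⁻¹ * (∑ i, μ i / (μ i + lam)) := by
      apply mul_nonneg hNinv
      apply Finset.sum_nonneg
      intro i _
      have := hμ i
      positivity
    linarith
  have hfκ₀ : f κ₀ < 1 := by
    have h1 : f κ₀ ≤ C / κ₀ := by
      have h2 : ∑ i, μ i / (μ i + κ₀) ≤ ∑ i, μ i / κ₀ := by
        apply Finset.sum_le_sum
        intro i _
        exact div_le_div_of_nonneg_left (hμ i).le hκ₀pos (by linarith [hμ i])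
      calc f κ₀ ≤ (N : ℝ)⁻¹ * (∑ i, μ i / κ₀) + lam / κ₀ := by
            exact add_le_add (mul_le_mul_of_nonneg_left h2 hNinv) le_rfl
        _ = C / κ₀ := by
            rw [← Finset.sum_div, hC, add_div]; ring
    have : C / κ₀ < 1 := by
      rw [div_lt_one hκ₀pos]; simp [hκ₀]
    exact lt_of_le_of_lt h1 this
  have hcont : ContinuousOn f (Set.Icc lam κ₀) := by
    apply ContinuousOn.add
    · apply ContinuousOn.mul continuousOn_const
      apply continuousOn_finset_sum
      intro i _
      apply ContinuousOn.div continuousOn_const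
      · exact (continuous_const.add continuous_id).continuousOn
      · exact fun x hx => ne_of_gt (by linarith [hμ i, hx.1] : 0 < μ i + x)
    · exact ContinuousOn.div continuousOn_const continuousOn_id
        (fun x hx => ne_of_gt (lt_of_lt_of_le hlam hx.1))
  have hmem : (1:ℝ) ∈ Set.Icc (f κ₀) (f lam) := ⟨hfκ₀.le, hflam⟩
  obtain ⟨κ, hκmem, hκeq⟩ := intermediate_value_Icc' hlt.le hcont hmem
  have hκpos : 0 < κ := lt_of_lt_of_le hlam hκmem.1
  refine ⟨κ, ⟨hκpos, hκeq⟩, ?_⟩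
  rintro y ⟨hy, hyeq⟩
  exact hanti.injOn (Set.mem_Ioi.mpr hy) (Set.mem_Ioi.mpr hκpos) (show f y = f κ from by rw [hκeq]; exact hyeq)


lemma trace_formula {p : ℕ} {S : Matrix (Fin p) (Fin p) ℝ} (hS : S.PosDef) {κ : ℝ}
    (hκ : 0 < κ) :
    (S * (S + κ • (1 : Matrix (Fin p) (Fin p) ℝ))⁻¹).trace
      = ∑ i, hS.1.eigenvalues i / (hS.1.eigenvalues i + κ) := by
  set μ := hS.1.eigenvalues with hμdef
  set U : Matrix (Fin p) (Fin p) ℝ := (hS.1.eigenvectorUnitary : Matrix (Fin p) (Fin p) ℝ)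
    with hUdef
  have hU1 : U * star U = 1 := (Matrix.mem_unitaryGroup_iff).mp hS.1.eigenvectorUnitary.2
  have hU2 : star U * U = 1 := (Matrix.mem_unitaryGroup_iff').mp hS.1.eigenvectorUnitary.2
  have hμpos : ∀ i, 0 < μ i + κ := fun i => by linarith [hS.eigenvalues_pos i]
  have hcoe : (RCLike.ofReal ∘ μ : Fin p → ℝ) = μ := funext fun i => rfl
  have hspec : S = U * diagonal μ * star U := by
    have := hS.1.spectral_theorem
    rwa [hcoe] at this
  have hadd : S + κ • (1 : Matrix (Fin p) (Fin p) ℝ)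
      = U * diagonal (fun i => μ i + κ) * star U := by
    have hd : diagonal (fun i => μ i + κ) = diagonal μ + κ • (1 : Matrix (Fin p) (Fin p) ℝ) := by
      ext i j
      by_cases h : i = j <;> simp [Matrix.diagonal_apply, h, Matrix.one_apply]
    rw [hd, Matrix.mul_add, Matrix.add_mul, ← hspec, Matrix.mul_smul, Matrix.smul_mul,
      Matrix.mul_one, hU1]
  have hdd : diagonal (fun i => μ i + κ) * diagonal (fun i => (μ i + κ)⁻¹) = 1 := by
    rw [diagonal_mul_diagonal]
    have h : (fun i => (μ i + κ) * (μ i + κ)⁻¹) = fun _ => (1:ℝ) :=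
      funext fun i => mul_inv_cancel₀ (hμpos i).ne'
    rw [h, diagonal_one]
  have hinv : (S + κ • (1 : Matrix (Fin p) (Fin p) ℝ))⁻¹
      = U * diagonal (fun i => (μ i + κ)⁻¹) * star U := by
    apply inv_eq_right_inv
    rw [hadd]
    calc U * diagonal (fun i => μ i + κ) * star U * (U * diagonal (fun i => (μ i + κ)⁻¹) * star U)
        = U * diagonal (fun i => μ i + κ) * (star U * U) * diagonal (fun i => (μ i + κ)⁻¹)
            * star U := by
          simp only [Matrix.mul_assoc]
      _ = 1 := by rw [hU2, Matrix.mul_one, Matrix.mul_assoc U, hdd, Matrix.mul_one, hU1]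
  rw [hinv, hspec]
  have : U * diagonal μ * star U * (U * diagonal (fun i => (μ i + κ)⁻¹) * star U)
      = U * (diagonal μ * diagonal (fun i => (μ i + κ)⁻¹)) * star U := by
    calc U * diagonal μ * star U * (U * diagonal (fun i => (μ i + κ)⁻¹) * star U)
        = U * diagonal μ * (star U * U) * diagonal (fun i => (μ i + κ)⁻¹) * star U := by
          simp only [Matrix.mul_assoc]
      _ = _ := by rw [hU2, Matrix.mul_one, Matrix.mul_assoc U]
  rw [this, trace_mul_cycle, ← Matrix.mul_assoc, hU2, Matrix.one_mul,
    diagonal_mul_diagonal, trace_diagonal]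
  exact Finset.sum_congr rfl fun i _ => (div_eq_mul_inv _ _).symm

/-- Existence and uniqueness of the effective regularization: for each `λ > 0`
there is a unique `κ > 0` with `(1/N) Tr[Σ(Σ+κI)⁻¹] + λ/κ = 1`. -/
theorem effective_reg_exists_unique (p N : ℕ) (hN : 0 < N)
    (S : Matrix (Fin p) (Fin p) ℝ) (hS : S.PosDef)
    (lam : ℝ) (hlam : 0 < lam) :
    ∃! κ : ℝ, 0 < κ ∧
      (N : ℝ)⁻¹ * (S * (S + κ • (1 : Matrix (Fin p) (Fin p) ℝ))⁻¹).trace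
        + lam / κ = 1 := by
  obtain ⟨κ, ⟨hκ, heq⟩, huniq⟩ :=
    scalar_eu p N hN hS.1.eigenvalues (fun i => hS.eigenvalues_pos i) lam hlam
  refine ⟨κ, ⟨hκ, by rw [trace_formula hS hκ]; exact heq⟩, ?_⟩
  rintro y ⟨hy, hyeq⟩
  exact huniq y ⟨hy, by rw [← trace_formula hS hy]; exact hyeq⟩
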